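/- Let d = ⟨d_0, …, d_{ℓ−1}⟩ be an extended regular digit string and let j satisfy j + 1 ≤ ℓ − 1 and d_j = 0. Then d_{j+1} ≥ 1, and the string fix-borrow(d, j) has the same value as d, i.e. Σ_i d'_i·2^i = Σ_i d_i·2^i where d' = fix-borrow(d, j). -/

import Mathlib

/-- The value `Σ_{i<ℓ} d_i · 2^i` of a digit string. -/
def digitVal (d : List ℕ) : ℕ := ∑ i ∈ Finset.range d.length, d.getD i 0 * 2 ^ i

/-- A digit string `⟨d_0, …, d_{ℓ−1}⟩` is extended regular if
(i) every `3` is preceded by a `0` or a `1` with only `2`'s in between, and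
(ii) every `0` is preceded by a `2` or a `3` with only `1`'s in between. -/
def ExtReg (d : List ℕ) : Prop :=
  (∀ j < d.length, d.getD j 0 = 3 →
      ∃ k < j, (d.getD k 0 = 0 ∨ d.getD k 0 = 1) ∧
        ∀ m, k < m → m < j → d.getD m 0 = 2) ∧
  (∀ j < d.length, d.getD j 0 = 0 →
      ∃ k < j, (d.getD k 0 = 2 ∨ d.getD k 0 = 3) ∧
        ∀ m, k < m → m < j → d.getD m 0 = 1)

/-- Remove all trailing zero digits of a digit string. -/
def stripTrailingZeros (d : List ℕ) : List ℕ :=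
  (d.reverse.dropWhile (· = 0)).reverse

/-- Fix-borrow at position `j` (assuming `d_j = 0` and `j + 1` is a valid
position): set `d_j := 2`, decrease `d_{j+1}` by one, and remove any trailing
zero digits. -/
def fixBorrow (d : List ℕ) (j : ℕ) : List ℕ :=
  stripTrailingZeros ((d.set j 2).set (j + 1) (d.getD (j + 1) 0 - 1))

lemma digitVal_cons (a : ℕ) (t : List ℕ) : digitVal (a :: t) = a + 2 * digitVal t := by
  unfold digitVal
  rw [List.length_cons, Finset.sum_range_succ']
  simp only [List.getD_cons_succ, List.getD_cons_zero, pow_succ, pow_zero, mul_one,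
    Finset.mul_sum]
  rw [add_comm]
  congr 1
  exact Finset.sum_congr rfl fun i _ => by ring

lemma digitVal_append (l t : List ℕ) :
    digitVal (l ++ t) = digitVal l + 2 ^ l.length * digitVal t := by
  induction l with
  | nil => simp [digitVal]
  | cons a l ih => simp [digitVal_cons, ih]; ring

lemma digitVal_set (l : List ℕ) (i x : ℕ) :
    digitVal (l.set i x) + l.getD i 0 * 2 ^ i = digitVal l + x * 2 ^ i ∨ l.length ≤ i := by
  induction l generalizing i with
  | nil => right; simp
  | cons a t ih =>
    cases i with
    | zero => left; simp [digitVal_cons]; ring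
    | succ i =>
      rcases ih i with h | h
      · left
        simp only [List.set_cons_succ, digitVal_cons, List.getD_cons_succ, pow_succ]
        nlinarith [h]
      · right; simpa using h

lemma digitVal_zeros (t : List ℕ) (h : ∀ x ∈ t, x = 0) : digitVal t = 0 := by
  induction t with
  | nil => simp [digitVal]
  | cons a t ih =>
    rw [digitVal_cons, h a (by simp), ih fun x hx => h x (by simp [hx])]

lemma digitVal_strip (d : List ℕ) : digitVal (stripTrailingZeros d) = digitVal d := by
  have hd : stripTrailingZeros d ++ (d.reverse.takeWhile (· = 0)).reverse = d := by
    rw [stripTrailingZeros, ← List.reverse_append, List.takeWhile_append_dropWhile,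
      List.reverse_reverse]
  have hz : digitVal (d.reverse.takeWhile (· = 0)).reverse = 0 := by
    apply digitVal_zeros
    intro x hx
    have := List.mem_takeWhile_imp (List.mem_reverse.mp hx)
    simpa using this
  conv_rhs => rw [← hd]
  rw [digitVal_append, hz, mul_zero, add_zero]

theorem stmt_9 (d : List ℕ) (j : ℕ) (hj : j + 1 < d.length)
    (hdig : ∀ x ∈ d, x ≤ 3) (hreg : ExtReg d) (h0 : d.getD j 0 = 0) :
    1 ≤ d.getD (j + 1) 0 ∧ digitVal (fixBorrow d j) = digitVal d := by
  set a := d.getD (j + 1) 0 with ha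
  have h1 : 1 ≤ a := by
    by_contra h
    have haz : d.getD (j + 1) 0 = 0 := by omega
    obtain ⟨k, hk, hk23, hmid⟩ := hreg.2 (j + 1) hj haz
    rcases Nat.lt_or_ge k j with hkj | hkj
    · have := hmid j hkj (by omega)
      omega
    · have : k = j := by omega
      subst this
      omega
  refine ⟨h1, ?_⟩
  have len1 : (d.set j 2).length = d.length := List.length_set
  have g1 : (d.set j 2).getD (j + 1) 0 = a := by
    rw [ha]
    simp [List.getD, List.getElem?_set_ne (by omega : j ≠ j + 1)]
  rw [fixBorrow, digitVal_strip]
  have e1 := digitVal_set (d.set j 2) (j + 1) (a - 1)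
  have e2 := digitVal_set d j 2
  rcases e1 with e1 | e1; swap
  · omega
  rcases e2 with e2 | e2; swap
  · omega
  rw [g1] at e1
  rw [h0, zero_mul, add_zero] at e2
  have hp : a * 2 ^ (j + 1) = (a - 1) * 2 ^ (j + 1) + 2 ^ (j + 1) := by
    have := Nat.sub_add_cancel h1
    nlinarith [this]
  have hq : (2 : ℕ) * 2 ^ j = 2 ^ (j + 1) := by ring
  rw [← ha]
  linarith [e1, e2, hp, hq]
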